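/- Let λ₁, λ₂ ∈ ℂ∖{0} and b₁, b₂ ∈ ℂ with b₁ ≠ 1/2 and b₂ ≠ 1/2. There exists a ℂ-linear bijection ψ : Q × Q → Q × Q that is grading-homogeneous (i.e., either ψ(Q×{0}) = Q×{0} and ψ({0}×Q) = {0}×Q, or ψ(Q×{0}) = {0}×Q and ψ({0}×Q) = Q×{0}) and intertwines all the operators of Ω_𝒯(λ₁,b₁) with those of Ω_𝒯(λ₂,b₂) (i.e., ψ∘L_m^{(λ₁,b₁)} = L_m^{(λ₂,b₂)}∘ψ, ψ∘H_m^{(λ₁,b₁)} = H_m^{(λ₂,b₂)}∘ψ, ψ∘G_m^{±,(λ₁,b₁)} = G_m^{±,(λ₂,b₂)}∘ψ for all m ∈ ℤ), if and only if λ₁ = λ₂ and b₁ = b₂. -/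

import Mathlib

/- STATEMENT 15: For λ₁, λ₂ ≠ 0 and b₁, b₂ ≠ 1/2, there is a grading-homogeneous
ℂ-linear bijection ψ of Q × Q intertwining all the operators of Ω_𝒯(λ₁,b₁) with those
of Ω_𝒯(λ₂,b₂) if and only if λ₁ = λ₂ and b₁ = b₂. -/

open Polynomial

noncomputable section

abbrev Qp := Polynomial ℂ

/-- `L_m(p,q) = (λ^m(x+m(b−1))·p(x−m), λ^m(x+m(b−1/2))·q(x−m))` -/
def OL (lam b : ℂ) (m : ℤ) : Qp × Qp → Qp × Qp :=
  fun w => (lam ^ m • ((X + C ((m : ℂ) * (b - 1))) * w.1.comp (X - C (m : ℂ))),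
            lam ^ m • ((X + C ((m : ℂ) * (b - 1 / 2))) * w.2.comp (X - C (m : ℂ))))

/-- `H_m(p,q) = (−2b·λ^m·p(x−m), (1−2b)·λ^m·q(x−m))` -/
def OH (lam b : ℂ) (m : ℤ) : Qp × Qp → Qp × Qp :=
  fun w => ((-2 * b * lam ^ m) • w.1.comp (X - C (m : ℂ)),
            ((1 - 2 * b) * lam ^ m) • w.2.comp (X - C (m : ℂ)))

/-- `G_m⁺(p,q) = (0, −2λ^m(x+m(2b−1))·p(x−m))` -/
def OGp (lam b : ℂ) (m : ℤ) : Qp × Qp → Qp × Qp :=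
  fun w => (0, (-2 * lam ^ m) • ((X + C ((m : ℂ) * (2 * b - 1))) * w.1.comp (X - C (m : ℂ))))

/-- `G_m⁻(p,q) = (λ^m·q(x−m), 0)` -/
def OGm (lam : ℂ) (m : ℤ) : Qp × Qp → Qp × Qp :=
  fun w => (lam ^ m • w.2.comp (X - C (m : ℂ)), 0)

private lemma smul_cancel_aux {a b : ℂ} {p : Qp} (hp : p ≠ 0) (h : a • p = b • p) : a = b := by
  have h2 : (a - b) • p = 0 := by rw [sub_smul, h, sub_self]
  rcases smul_eq_zero.1 h2 with h3 | h3
  · exact sub_eq_zero.1 h3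
  · exact absurd h3 hp

theorem stmt15 (lam₁ lam₂ : ℂ) (h₁ : lam₁ ≠ 0) (h₂ : lam₂ ≠ 0)
    (b₁ b₂ : ℂ) (hb₁ : b₁ ≠ 1 / 2) (hb₂ : b₂ ≠ 1 / 2) :
    (∃ ψ : (Qp × Qp) ≃ₗ[ℂ] (Qp × Qp),
        ((⇑ψ '' {w : Qp × Qp | w.2 = 0} = {w : Qp × Qp | w.2 = 0} ∧
          ⇑ψ '' {w : Qp × Qp | w.1 = 0} = {w : Qp × Qp | w.1 = 0}) ∨
         (⇑ψ '' {w : Qp × Qp | w.2 = 0} = {w : Qp × Qp | w.1 = 0} ∧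
          ⇑ψ '' {w : Qp × Qp | w.1 = 0} = {w : Qp × Qp | w.2 = 0})) ∧
        (∀ m : ℤ, ∀ w : Qp × Qp, ψ (OL lam₁ b₁ m w) = OL lam₂ b₂ m (ψ w)) ∧
        (∀ m : ℤ, ∀ w : Qp × Qp, ψ (OH lam₁ b₁ m w) = OH lam₂ b₂ m (ψ w)) ∧
        (∀ m : ℤ, ∀ w : Qp × Qp, ψ (OGp lam₁ b₁ m w) = OGp lam₂ b₂ m (ψ w)) ∧
        (∀ m : ℤ, ∀ w : Qp × Qp, ψ (OGm lam₁ m w) = OGm lam₂ m (ψ w))) ↔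
      (lam₁ = lam₂ ∧ b₁ = b₂) := by
  constructor
  · rintro ⟨ψ, hgrad, hL, hH, hGp, hGm⟩
    have hne10 : ψ ((1:Qp), (0:Qp)) ≠ 0 := by
      rw [Ne, LinearEquiv.map_eq_zero_iff, Prod.mk_eq_zero]
      simp
    have hne01 : ψ ((0:Qp), (1:Qp)) ≠ 0 := by
      rw [Ne, LinearEquiv.map_eq_zero_iff, Prod.mk_eq_zero]
      simp
    have h12b₂ : (1 - 2*b₂ : ℂ) ≠ 0 := by
      intro h; exact hb₂ (by linear_combination -h/2)
    have h12b₁ : (1 - 2*b₁ : ℂ) ≠ 0 := by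
      intro h; exact hb₁ (by linear_combination -h/2)
    rcases hgrad with ⟨hA1, hA2⟩ | ⟨hB1, hB2⟩
    · -- parity preserving case
      have h1 : ∀ p : Qp, (ψ (p, 0)).2 = 0 := by
        intro p
        have hmem : ((p, (0:Qp)) : Qp × Qp) ∈ {w : Qp × Qp | w.2 = 0} := rfl
        have h := Set.mem_image_of_mem ψ hmem
        rw [hA1] at h
        exact h
      have h2 : ∀ q : Qp, (ψ (0, q)).1 = 0 := by
        intro q
        have hmem : (((0:Qp), q) : Qp × Qp) ∈ {w : Qp × Qp | w.1 = 0} := rfl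
        have h := Set.mem_image_of_mem ψ hmem
        rw [hA2] at h
        exact h
      obtain ⟨u, hψ10⟩ : ∃ u, ψ ((1:Qp), (0:Qp)) = (u, 0) :=
        ⟨_, Prod.ext_iff.2 ⟨rfl, h1 1⟩⟩
      obtain ⟨v, hψ01⟩ : ∃ v, ψ ((0:Qp), (1:Qp)) = (0, v) :=
        ⟨_, Prod.ext_iff.2 ⟨h2 1, rfl⟩⟩
      have hu0 : u ≠ 0 := by
        rintro rfl; exact hne10 (by simp [hψ10])
      have hv0 : v ≠ 0 := by
        rintro rfl; exact hne01 (by simp [hψ01])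
      -- b₁ = b₂ from H₀ on (1,0)
      have keyb := hH 0 ((1:Qp), (0:Qp))
      simp only [OH, hψ10, Int.cast_zero, map_zero, sub_zero, comp_X, zero_comp,
        zpow_zero, mul_one, smul_zero] at keyb
      have keyb' : (-2*b₁) • ((u, (0:Qp)) : Qp × Qp) = ((-2*b₂) • u, (0:Qp)) := by
        rw [← hψ10, ← map_smul,
          show ((-2*b₁) • (((1:Qp), (0:Qp)) : Qp × Qp)) = (((-2*b₁) • (1:Qp), (0:Qp)) : Qp × Qp) by
            simp]
        exact keyb
      have c1 : (-2*b₁) • u = (-2*b₂) • u := by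
        simpa using congrArg Prod.fst keyb'
      have hb : b₁ = b₂ := by
        have e := smul_cancel_aux hu0 c1
        linear_combination -e/2
      -- lam₁ = lam₂ from H₁ on (0,1)
      have keyl := hH 1 ((0:Qp), (1:Qp))
      simp only [OH, hψ01, Int.cast_one, zpow_one, one_comp, zero_comp, smul_zero] at keyl
      have keyl' : ((1 - 2*b₁)*lam₁) • (((0:Qp), v) : Qp × Qp)
          = ((0:Qp), ((1 - 2*b₂)*lam₂) • (v.comp (X - C 1))) := by
        rw [← hψ01, ← map_smul,
          show (((1 - 2*b₁)*lam₁) • (((0:Qp), (1:Qp)) : Qp × Qp))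
              = (((0:Qp), ((1 - 2*b₁)*lam₁) • (1:Qp)) : Qp × Qp) by simp]
        exact keyl
      have c2 : ((1 - 2*b₁)*lam₁) • v = ((1 - 2*b₂)*lam₂) • (v.comp (X - C 1)) := by
        simpa using congrArg Prod.snd keyl'
      have c3 : ((1 - 2*b₁)*lam₁) * v.leadingCoeff = ((1 - 2*b₂)*lam₂) * v.leadingCoeff := by
        have h := congrArg Polynomial.leadingCoeff c2
        rwa [smul_eq_C_mul, smul_eq_C_mul, leadingCoeff_mul, leadingCoeff_mul,
          leadingCoeff_C, leadingCoeff_C,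
          leadingCoeff_comp (by rw [natDegree_X_sub_C]; exact one_ne_zero),
          leadingCoeff_X_sub_C, one_pow, mul_one] at h
      have c4 := mul_right_cancel₀ (leadingCoeff_ne_zero.2 hv0) c3
      rw [← hb] at c4
      exact ⟨mul_left_cancel₀ h12b₁ c4, hb⟩
    · -- parity swapping case: derive a contradiction
      have h1 : ∀ p : Qp, (ψ (p, 0)).1 = 0 := by
        intro p
        have hmem : ((p, (0:Qp)) : Qp × Qp) ∈ {w : Qp × Qp | w.2 = 0} := rfl
        have h := Set.mem_image_of_mem ψ hmem
        rw [hB1] at h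
        exact h
      obtain ⟨g, hψ10⟩ : ∃ g, ψ ((1:Qp), (0:Qp)) = (0, g) :=
        ⟨_, Prod.ext_iff.2 ⟨h1 1, rfl⟩⟩
      have hg0 : g ≠ 0 := by
        rintro rfl; exact hne10 (by simp [hψ10])
      -- e1 : -2b₁ = 1-2b₂  from H₀ on (1,0)
      have keyb := hH 0 ((1:Qp), (0:Qp))
      simp only [OH, hψ10, Int.cast_zero, map_zero, sub_zero, comp_X, zero_comp,
        zpow_zero, mul_one, smul_zero] at keyb
      have keyb' : (-2*b₁) • (((0:Qp), g) : Qp × Qp) = ((0:Qp), (1 - 2*b₂) • g) := by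
        rw [← hψ10, ← map_smul,
          show ((-2*b₁) • (((1:Qp), (0:Qp)) : Qp × Qp)) = (((-2*b₁) • (1:Qp), (0:Qp)) : Qp × Qp) by
            simp]
        exact keyb
      have c1 : (-2*b₁) • g = (1 - 2*b₂) • g := by
        simpa using congrArg Prod.snd keyb'
      have e1 : -2*b₁ = 1 - 2*b₂ := smul_cancel_aux hg0 c1
      -- hX2 : (ψ (X,0)).2 = X * g  from L₀ on (1,0)
      have keyX := hL 0 ((1:Qp), (0:Qp))
      simp only [OL, hψ10, Int.cast_zero, zero_mul, map_zero, add_zero, sub_zero,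
        comp_X, zero_comp, mul_zero, zpow_zero, one_smul, mul_one, smul_zero] at keyX
      have hX2 : (ψ ((X:Qp), (0:Qp))).2 = X * g := by
        rw [keyX]
      -- s1 : from H₁ on (1,0)
      have keyS := hH 1 ((1:Qp), (0:Qp))
      simp only [OH, hψ10, Int.cast_one, zpow_one, one_comp, zero_comp, smul_zero] at keyS
      have keyS' : (-2*b₁*lam₁) • (((0:Qp), g) : Qp × Qp)
          = ((0:Qp), ((1 - 2*b₂)*lam₂) • (g.comp (X - C 1))) := by
        rw [← hψ10, ← map_smul,
          show ((-2*b₁*lam₁) • (((1:Qp), (0:Qp)) : Qp × Qp))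
              = (((-2*b₁*lam₁) • (1:Qp), (0:Qp)) : Qp × Qp) by simp]
        exact keyS
      have s1 : (-2*b₁*lam₁) • g = ((1 - 2*b₂)*lam₂) • (g.comp (X - C 1)) := by
        simpa using congrArg Prod.snd keyS'
      rw [e1] at s1
      rw [mul_smul, mul_smul] at s1
      have s1' : lam₁ • g = lam₂ • (g.comp (X - C 1)) :=
        smul_right_injective Qp h12b₂ s1
      -- E : from L₁ on (1,0)
      have e := hL 1 ((1:Qp), (0:Qp))
      simp only [OL, hψ10, Int.cast_one, zpow_one, one_mul, one_comp, zero_comp,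
        mul_zero, smul_zero, mul_one] at e
      have lhsE : (ψ (lam₁ • ((X:Qp) + C (b₁ - 1)), (0:Qp))).2
          = lam₁ • ((X:Qp) * g + (b₁ - 1) • g) := by
        have split : ((lam₁ • ((X:Qp) + C (b₁ - 1))), (0:Qp))
            = lam₁ • ((((X:Qp), (0:Qp)) : Qp × Qp) + (b₁ - 1) • (((1:Qp), (0:Qp)) : Qp × Qp)) := by
          simp [Prod.ext_iff, smul_eq_C_mul, smul_add, mul_add]
        rw [split, map_smul, map_add, map_smul, hψ10]
        simp [hX2, Prod.smul_snd]
      have e2 : lam₁ • ((X:Qp) * g + (b₁ - 1) • g)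
          = lam₂ • (((X:Qp) + C (b₂ - 1/2)) * g.comp (X - C 1)) := by
        have h := congrArg Prod.snd e
        rw [lhsE] at h
        simpa using h
      have s1c : C lam₁ * g = C lam₂ * g.comp (X - C 1) := by
        simpa [smul_eq_C_mul] using s1'
      have e2c : C lam₁ * ((X:Qp) * g + C (b₁ - 1) * g)
          = C lam₂ * (((X:Qp) + C (b₂ - 1/2)) * g.comp (X - C 1)) := by
        have h := e2
        simp only [smul_eq_C_mul] at h
        linear_combination h
      have keyfin : (C lam₁ * C (b₁ - 1) - C lam₁ * C (b₂ - 1/2)) * g = 0 := by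
        linear_combination e2c - ((X:Qp) + C (b₂ - 1/2)) * s1c
      rcases mul_eq_zero.1 keyfin with hf | hf
      · rw [← C_mul, ← C_mul, ← C_sub] at hf
        have hsc : lam₁ * (b₁ - 1) - lam₁ * (b₂ - 1/2) = 0 := by
          exact_mod_cast (Polynomial.C_eq_zero).1 hf
        have : lam₁ = 0 := by linear_combination -hsc - lam₁/2 * e1
        exact absurd this h₁
      · exact absurd hf hg0
  · rintro ⟨rfl, rfl⟩
    refine ⟨LinearEquiv.refl ℂ _, Or.inl ⟨Set.image_id _, Set.image_id _⟩, ?_, ?_, ?_, ?_⟩ <;> simp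

end
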